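/- Let f have M-Lipschitz continuous Hessian, and let [v; t] be a unit eigenvector of F = [[H_k, g_k], [g_kᵀ, -δ]] for eigenvalue -θ with θ > δ ≥ 0, where H_k = ∇²f(x_k), g_k = ∇f(x_k), t ≠ 0, and d = v/t with ‖d‖ > Δ > 0. Then with η = Δ/‖d‖, f(x_k + ηd) - f(x_k) ≤ -(Δ²/2)δ + (M/6)Δ³. -/

import Mathlib

set_option maxHeartbeats 1000000
set_option synthInstance.maxHeartbeats 400000

open scoped RealInnerProductSpace

/-- Cubic Taylor upper bound for functions with `M`-Lipschitz Hessian. -/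
lemma taylor_cubic_upper {n : ℕ}
    (f : EuclideanSpace ℝ (Fin n) → ℝ)
    (gf : EuclideanSpace ℝ (Fin n) → EuclideanSpace ℝ (Fin n))
    (Hf : EuclideanSpace ℝ (Fin n) → EuclideanSpace ℝ (Fin n) →L[ℝ] EuclideanSpace ℝ (Fin n))
    (M : ℝ)
    (hgrad : ∀ x, HasGradientAt f (gf x) x)
    (hhess : ∀ x, HasFDerivAt gf (Hf x) x)
    (hlip : ∀ x y, ‖Hf x - Hf y‖ ≤ M * ‖x - y‖)
    (x s : EuclideanSpace ℝ (Fin n)) :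
    f (x + s) - f x ≤ ⟪gf x, s⟫ + 1 / 2 * ⟪Hf x s, s⟫ + M / 6 * ‖s‖ ^ 3 := by
  -- line map and its derivative facts
  have hline : ∀ τ : ℝ, HasDerivAt (fun τ : ℝ => x + τ • s) s τ := by
    intro τ
    simpa using ((hasDerivAt_id τ).smul_const s).const_add x
  have hgd : ∀ τ : ℝ, HasDerivAt (fun τ : ℝ => gf (x + τ • s)) (Hf (x + τ • s) s) τ := by
    intro τ
    exact (hhess (x + τ • s)).comp_hasDerivAt τ (hline τ)
  have hfd : ∀ τ : ℝ, HasDerivAt (fun τ : ℝ => f (x + τ • s)) ⟪gf (x + τ • s), s⟫ τ := by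
    intro τ
    have := ((hgrad (x + τ • s)).hasFDerivAt).comp_hasDerivAt τ (hline τ)
    simp only [InnerProductSpace.toDual_apply_apply] at this
    exact this
  -- Layer 1: gradient bound
  have layer1 : ∀ τ ∈ Set.Icc (0:ℝ) 1,
      ‖gf (x + τ • s) - gf x - τ • Hf x s‖ ≤ M / 2 * ‖s‖ ^ 2 * τ ^ 2 := by
    have hφ : ∀ τ : ℝ, HasDerivAt (fun τ : ℝ => gf (x + τ • s) - gf x - τ • Hf x s)
        (Hf (x + τ • s) s - Hf x s) τ := by
      intro τ
      have h2 : HasDerivAt (fun τ : ℝ => τ • Hf x s) (Hf x s) τ := by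
        simpa using (hasDerivAt_id τ).smul_const (Hf x s)
      exact ((hgd τ).sub_const (gf x)).sub h2
    have hB : ∀ τ : ℝ, HasDerivAt (fun τ : ℝ => M / 2 * ‖s‖ ^ 2 * τ ^ 2)
        (M * ‖s‖ ^ 2 * τ) τ := by
      intro τ
      have := (hasDerivAt_pow 2 τ).const_mul (M / 2 * ‖s‖ ^ 2)
      exact this.congr_deriv (by ring)
    have := image_norm_le_of_norm_deriv_right_le_deriv_boundary
      (f := fun τ : ℝ => gf (x + τ • s) - gf x - τ • Hf x s)
      (a := 0) (b := 1)
      (fun τ _ => (hφ τ).continuousAt.continuousWithinAt)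
      (fun τ _ => (hφ τ).hasDerivWithinAt)
      (by simp) hB ?_
    · intro τ hτ
      simpa [mul_comm, mul_left_comm] using this hτ
    · intro τ hτ
      have h1 : ‖Hf (x + τ • s) s - Hf x s‖ ≤ ‖Hf (x + τ • s) - Hf x‖ * ‖s‖ := by
        have h := (Hf (x + τ • s) - Hf x).le_opNorm s
        rwa [ContinuousLinearMap.sub_apply] at h
      have h2 : ‖Hf (x + τ • s) - Hf x‖ ≤ M * (τ * ‖s‖) := by
        have h := hlip (x + τ • s) x
        rwa [add_sub_cancel_left, norm_smul, Real.norm_eq_abs,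
          abs_of_nonneg hτ.1] at h
      calc ‖Hf (x + τ • s) s - Hf x s‖ ≤ M * (τ * ‖s‖) * ‖s‖ := by
            refine h1.trans ?_
            exact mul_le_mul_of_nonneg_right h2 (norm_nonneg s)
        _ = M * ‖s‖ ^ 2 * τ := by ring
  -- Layer 2: function bound
  have layer2 : ∀ τ ∈ Set.Icc (0:ℝ) 1,
      ‖f (x + τ • s) - f x - τ * ⟪gf x, s⟫ - τ ^ 2 / 2 * ⟪Hf x s, s⟫‖
        ≤ M / 6 * ‖s‖ ^ 3 * τ ^ 3 := by
    have hψ : ∀ τ : ℝ, HasDerivAt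
        (fun τ : ℝ => f (x + τ • s) - f x - τ * ⟪gf x, s⟫ - τ ^ 2 / 2 * ⟪Hf x s, s⟫)
        (⟪gf (x + τ • s) - gf x - τ • Hf x s, s⟫) τ := by
      intro τ
      have h1 : HasDerivAt (fun τ : ℝ => τ * ⟪gf x, s⟫) ⟪gf x, s⟫ τ := by
        simpa using (hasDerivAt_id τ).mul_const (⟪gf x, s⟫)
      have h2 : HasDerivAt (fun τ : ℝ => τ ^ 2 / 2 * ⟪Hf x s, s⟫)
          (τ * ⟪Hf x s, s⟫) τ := by
        have := ((hasDerivAt_pow 2 τ).div_const 2).mul_const (⟪Hf x s, s⟫)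
        exact this.congr_deriv (by ring)
      have := (((hfd τ).sub_const (f x)).sub h1).sub h2
      refine this.congr_deriv ?_
      rw [inner_sub_left, inner_sub_left, real_inner_smul_left]
    have hB : ∀ τ : ℝ, HasDerivAt (fun τ : ℝ => M / 6 * ‖s‖ ^ 3 * τ ^ 3)
        (M / 2 * ‖s‖ ^ 3 * τ ^ 2) τ := by
      intro τ
      have := (hasDerivAt_pow 3 τ).const_mul (M / 6 * ‖s‖ ^ 3)
      exact this.congr_deriv (by push_cast; ring)
    have := image_norm_le_of_norm_deriv_right_le_deriv_boundary
      (f := fun τ : ℝ => f (x + τ • s) - f x - τ * ⟪gf x, s⟫ - τ ^ 2 / 2 * ⟪Hf x s, s⟫)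
      (a := 0) (b := 1)
      (fun τ _ => (hψ τ).continuousAt.continuousWithinAt)
      (fun τ _ => (hψ τ).hasDerivWithinAt)
      (by simp) hB ?_
    · exact fun τ hτ => this hτ
    · intro τ hτ
      have h1 : ‖(⟪gf (x + τ • s) - gf x - τ • Hf x s, s⟫ : ℝ)‖
          ≤ ‖gf (x + τ • s) - gf x - τ • Hf x s‖ * ‖s‖ := by
        exact norm_inner_le_norm _ _
      have h2 := layer1 τ ⟨hτ.1, hτ.2.le⟩
      calc ‖(⟪gf (x + τ • s) - gf x - τ • Hf x s, s⟫ : ℝ)‖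
          ≤ M / 2 * ‖s‖ ^ 2 * τ ^ 2 * ‖s‖ :=
            h1.trans (mul_le_mul_of_nonneg_right h2 (norm_nonneg s))
        _ = M / 2 * ‖s‖ ^ 3 * τ ^ 2 := by ring
  have := layer2 1 ⟨zero_le_one, le_refl 1⟩
  have habs : f (x + s) - f x - ⟪gf x, s⟫ - 1 / 2 * ⟪Hf x s, s⟫ ≤ M / 6 * ‖s‖ ^ 3 := by
    have h := (le_abs_self _).trans (by simpa [Real.norm_eq_abs] using this)
    simpa using h
  linarith

/-- Sufficient decrease in the large-value case `t ≠ 0`, `‖d‖ > Δ` with the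
direction `d = v / t` and stepsize `η = Δ / ‖d‖`. -/
theorem large_step_decrease {n : ℕ}
    (f : EuclideanSpace ℝ (Fin n) → ℝ)
    (gf : EuclideanSpace ℝ (Fin n) → EuclideanSpace ℝ (Fin n))
    (Hf : EuclideanSpace ℝ (Fin n) → EuclideanSpace ℝ (Fin n) →L[ℝ] EuclideanSpace ℝ (Fin n))
    (M δ θ Δ : ℝ)
    (hgrad : ∀ x, HasGradientAt f (gf x) x)
    (hhess : ∀ x, HasFDerivAt gf (Hf x) x)
    (hlip : ∀ x y, ‖Hf x - Hf y‖ ≤ M * ‖x - y‖)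
    (xk : EuclideanSpace ℝ (Fin n))
    (hδ : 0 ≤ δ) (hθ : δ < θ)
    (v : EuclideanSpace ℝ (Fin n)) (t : ℝ) (ht : t ≠ 0)
    (hunit : ‖v‖ ^ 2 + t ^ 2 = 1)
    (heig1 : Hf xk v + t • gf xk = (-θ) • v)
    (heig2 : (inner ℝ (gf xk) v : ℝ) - δ * t = -θ * t)
    (d : EuclideanSpace ℝ (Fin n)) (hdd : d = t⁻¹ • v)
    (hΔ0 : 0 < Δ) (hΔd : Δ < ‖d‖) :
    f (xk + (Δ / ‖d‖) • d) - f xk ≤ -(Δ ^ 2 / 2) * δ + M / 6 * Δ ^ 3 := by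
  have hd0 : (0:ℝ) < ‖d‖ := lt_trans hΔ0 hΔd
  set η : ℝ := Δ / ‖d‖ with hη
  have hη0 : 0 < η := div_pos hΔ0 hd0
  have hη1 : η < 1 := (div_lt_one hd0).mpr hΔd
  have hηd : η * ‖d‖ = Δ := div_mul_cancel₀ Δ (ne_of_gt hd0)
  -- inner products
  have hgv : (⟪gf xk, v⟫ : ℝ) = (δ - θ) * t := by linarith [heig2]
  have hgd : (⟪gf xk, d⟫ : ℝ) = δ - θ := by
    rw [hdd, real_inner_smul_right, hgv]
    field_simp
  have hHd : Hf xk d = (-θ) • d - gf xk := by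
    have hv : Hf xk v = (-θ) • v - t • gf xk := by
      rw [← heig1]; abel
    rw [hdd, map_smul, hv]
    match_scalars <;> field_simp
  have hHdd : (⟪Hf xk d, d⟫ : ℝ) = -θ * ‖d‖ ^ 2 - (δ - θ) := by
    rw [hHd, inner_sub_left, real_inner_smul_left, real_inner_self_eq_norm_sq, hgd]
  -- apply Taylor bound with s = η • d
  have key := taylor_cubic_upper f gf Hf M hgrad hhess hlip xk (η • d)
  have hM : 0 ≤ M := by
    have h := hlip xk (xk + d)
    have hd : d ≠ 0 := by
      intro h'; rw [h'] at hd0; simp at hd0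
    have h2 : (0:ℝ) ≤ ‖Hf xk - Hf (xk + d)‖ := norm_nonneg _
    have h3 : ‖xk - (xk + d)‖ = ‖d‖ := by simp
    rw [h3] at h
    nlinarith
  have hs1 : (⟪gf xk, η • d⟫ : ℝ) = η * (δ - θ) := by
    rw [real_inner_smul_right, hgd]
  have hs2 : (⟪Hf xk (η • d), η • d⟫ : ℝ) = η ^ 2 * (-θ * ‖d‖ ^ 2 - (δ - θ)) := by
    rw [map_smul, real_inner_smul_left, real_inner_smul_right, hHdd]
    ring
  have hs3 : ‖η • d‖ = Δ := by
    rw [norm_smul, Real.norm_eq_abs, abs_of_pos hη0, hηd]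
  rw [hs1, hs2, hs3] at key
  refine key.trans ?_
  have hηΔ : η ^ 2 * ‖d‖ ^ 2 = Δ ^ 2 := by nlinarith [hηd]
  nlinarith [mul_pos hη0 (sub_pos.mpr hη1), sq_nonneg η, hΔ0.le]
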